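/- Let a, b, c be nonzero real numbers satisfying b² = (144a⁶ − 121a²)/(64a⁴ − 20) (with 64a⁴ − 20 ≠ 0) and c² = 2a² − b². Set Γ_1 = Γ_2 = 1, Γ_3 = Γ_4 = −1/2, Γ_5 = 3/4, and positions z_1 = a, z_2 = −a, z_3 = b + ic, z_4 = −b − ic, z_5 = 0 (which are pairwise distinct), and Λ = (−a² + 5b² − 10ibc − 5c²)/(2a²(b² − 4ibc − 3c²)). Then for every n ∈ {1,...,5}, Λ·z_n = Σ_{j≠n} Γ_j / conj(z_n − z_j); moreover |Λ| = 1 and Im(Λ) ≠ 0. In particular the configuration is a collapse configuration of the five-vortex problem. -/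

import Mathlib

open Finset Complex

set_option maxHeartbeats 4000000 in
set_option maxRecDepth 8000 in
theorem five_vortex_collapse_family (a b c : ℝ)
    (ha : a ≠ 0) (hb : b ≠ 0) (hc : c ≠ 0)
    (hden : 64*a^4 - 20 ≠ 0)
    (hb2 : b^2 = (144*a^6 - 121*a^2)/(64*a^4 - 20))
    (hc2 : c^2 = 2*a^2 - b^2)
    (Γ : Fin 5 → ℝ) (hΓ : Γ = ![1, 1, -1/2, -1/2, 3/4])
    (z : Fin 5 → ℂ)
    (hz : z = ![(a : ℂ), -(a : ℂ), (b : ℂ) + (c : ℂ)*Complex.I,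
      -((b : ℂ) + (c : ℂ)*Complex.I), 0])
    (Λ : ℂ)
    (hΛ : Λ = (-(a:ℂ)^2 + 5*(b:ℂ)^2 - 10*Complex.I*(b:ℂ)*(c:ℂ) - 5*(c:ℂ)^2)
        / (2*(a:ℂ)^2 * ((b:ℂ)^2 - 4*Complex.I*(b:ℂ)*(c:ℂ) - 3*(c:ℂ)^2))) :
    Function.Injective z ∧
    (∀ n, Λ * z n = ∑ j ∈ univ.filter (· ≠ n),
      (Γ j : ℂ) / (starRingEnd ℂ) (z n - z j)) ∧
    ‖Λ‖ = 1 ∧ Λ.im ≠ 0 := by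
  have haC : (a:ℂ) ≠ 0 := Complex.ofReal_ne_zero.mpr ha
  have hbC : (b:ℂ) ≠ 0 := Complex.ofReal_ne_zero.mpr hb
  have hcC : (c:ℂ) ≠ 0 := Complex.ofReal_ne_zero.mpr hc
  have hdenC : (64:ℂ)*(a:ℂ)^4 - 20 ≠ 0 := by
    have h := Complex.ofReal_ne_zero.mpr hden
    push_cast at h
    convert h using 1
  have E2 : (c:ℂ)^2 = 2*(a:ℂ)^2 - (b:ℂ)^2 := by exact_mod_cast hc2
  rw [eq_div_iff hden] at hb2
  have E1 : (b:ℂ)^2 * (64*(a:ℂ)^4 - 20) = 144*(a:ℂ)^6 - 121*(a:ℂ)^2 := by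
    exact_mod_cast hb2
  have h1 : (b:ℂ) + (c:ℂ)*Complex.I ≠ 0 := by
    intro h; exact hc (by simpa using congrArg Complex.im h)
  have h4 : (b:ℂ) - (c:ℂ)*Complex.I ≠ 0 := by
    intro h; exact hc (by simpa using congrArg Complex.im h)
  have h5 : (b:ℂ) - 3*(c:ℂ)*Complex.I ≠ 0 := by
    intro h; apply hc; have := congrArg Complex.im h; simp at this; linarith
  have h5' : (b:ℂ) + 3*(c:ℂ)*Complex.I ≠ 0 := by
    intro h; apply hc; have := congrArg Complex.im h; simp at this; linarith
  have hD : (b:ℂ)^2 - 4*Complex.I*(b:ℂ)*(c:ℂ) - 3*(c:ℂ)^2 ≠ 0 := by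
    have hf : (b:ℂ)^2 - 4*Complex.I*(b:ℂ)*(c:ℂ) - 3*(c:ℂ)^2
        = ((b:ℂ) - (c:ℂ)*Complex.I)*((b:ℂ) - 3*(c:ℂ)*Complex.I) := by
      linear_combination (-3*(c:ℂ)^2) * Complex.I_sq
    rw [hf]; exact mul_ne_zero h4 h5
  have hD' : (b:ℂ)^2 + 4*Complex.I*(b:ℂ)*(c:ℂ) - 3*(c:ℂ)^2 ≠ 0 := by
    have hf : (b:ℂ)^2 + 4*Complex.I*(b:ℂ)*(c:ℂ) - 3*(c:ℂ)^2
        = ((b:ℂ) + (c:ℂ)*Complex.I)*((b:ℂ) + 3*(c:ℂ)*Complex.I) := by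
      linear_combination (-3*(c:ℂ)^2) * Complex.I_sq
    rw [hf]; exact mul_ne_zero h1 h5'
  have hDen : 2*(a:ℂ)^2 * ((b:ℂ)^2 - 4*Complex.I*(b:ℂ)*(c:ℂ) - 3*(c:ℂ)^2) ≠ 0 :=
    mul_ne_zero (mul_ne_zero two_ne_zero (pow_ne_zero 2 haC)) hD
  have hDen' : 2*(a:ℂ)^2 * ((b:ℂ)^2 + 4*Complex.I*(b:ℂ)*(c:ℂ) - 3*(c:ℂ)^2) ≠ 0 :=
    mul_ne_zero (mul_ne_zero two_ne_zero (pow_ne_zero 2 haC)) hD'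
  have hNc : (starRingEnd ℂ) (-(a:ℂ)^2 + 5*(b:ℂ)^2 - 10*Complex.I*(b:ℂ)*(c:ℂ) - 5*(c:ℂ)^2)
      = -(a:ℂ)^2 + 5*(b:ℂ)^2 + 10*Complex.I*(b:ℂ)*(c:ℂ) - 5*(c:ℂ)^2 := by
    simp [map_sub, map_add, map_mul, map_neg, map_pow, map_ofNat, Complex.conj_ofReal,
      Complex.conj_I]
  have hDc : (starRingEnd ℂ) (2*(a:ℂ)^2 * ((b:ℂ)^2 - 4*Complex.I*(b:ℂ)*(c:ℂ) - 3*(c:ℂ)^2))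
      = 2*(a:ℂ)^2 * ((b:ℂ)^2 + 4*Complex.I*(b:ℂ)*(c:ℂ) - 3*(c:ℂ)^2) := by
    simp [map_sub, map_add, map_mul, map_neg, map_pow, map_ofNat, Complex.conj_ofReal,
      Complex.conj_I]
  refine ⟨?_, ?_, ?_, ?_⟩
  · -- injectivity
    subst hz
    intro i j hij
    fin_cases i <;> fin_cases j <;>
      simp only [Matrix.cons_val_zero, Matrix.cons_val_one, Matrix.head_cons, Fin.isValue,
        Matrix.cons_val_two, Matrix.tail_cons, Matrix.cons_val_three, Matrix.cons_val_four,
        Fin.zero_eta, Fin.mk_one,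
        show ∀ (h : 2 < 5), (⟨2, h⟩ : Fin 5) = 2 from fun _ => rfl,
        show ∀ (h : 3 < 5), (⟨3, h⟩ : Fin 5) = 3 from fun _ => rfl,
        show ∀ (h : 4 < 5), (⟨4, h⟩ : Fin 5) = 4 from fun _ => rfl] at hij <;>
      first
        | rfl
        | (exfalso
           have hre := congrArg Complex.re hij
           have him := congrArg Complex.im hij
           simp only [Complex.add_re, Complex.add_im, Complex.neg_re, Complex.neg_im,
             Complex.mul_re, Complex.mul_im, Complex.I_re, Complex.I_im,
             Complex.ofReal_re, Complex.ofReal_im, Complex.zero_re, Complex.zero_im,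
             mul_zero, mul_one, zero_mul, zero_sub, sub_zero, zero_add, add_zero,
             neg_neg, neg_zero] at hre him
           first
             | exact ha (by linarith)
             | exact hb (by linarith)
             | exact hc (by linarith))
  · -- the equations
    have e1 : (a:ℂ) + a ≠ 0 := by
      intro h; apply ha; have := congrArg Complex.re h; simp at this; linarith
    have e2 : (a:ℂ) - ((b:ℂ) + -((c:ℂ)*Complex.I)) ≠ 0 := by
      intro h; exact hc (by simpa using congrArg Complex.im h)
    have e3 : (a:ℂ) - ((c:ℂ)*Complex.I + -(b:ℂ)) ≠ 0 := by
      intro h; exact hc (by simpa using congrArg Complex.im h)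
    have e4 : (a:ℂ) + ((b:ℂ) + -((c:ℂ)*Complex.I)) ≠ 0 := by
      intro h; exact hc (by simpa using congrArg Complex.im h)
    have e5 : (a:ℂ) + ((c:ℂ)*Complex.I + -(b:ℂ)) ≠ 0 := by
      intro h; exact hc (by simpa using congrArg Complex.im h)
    have e6 : -(a:ℂ) - ((b:ℂ) + -((c:ℂ)*Complex.I)) ≠ 0 := by
      intro h; exact hc (by simpa using congrArg Complex.im h)
    have e7 : -(a:ℂ) - ((c:ℂ)*Complex.I + -(b:ℂ)) ≠ 0 := by
      intro h; exact hc (by simpa using congrArg Complex.im h)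
    have e8 : (b:ℂ) + -((c:ℂ)*Complex.I) ≠ 0 := by
      intro h; exact hc (by simpa using congrArg Complex.im h)
    have e9 : (c:ℂ)*Complex.I + -(b:ℂ) ≠ 0 := by
      intro h; exact hc (by simpa using congrArg Complex.im h)
    have e10 : (b:ℂ) + (b:ℂ) ≠ 0 := by
      intro h; apply hb; have := congrArg Complex.re h; simp at this; linarith
    have e11 : -(a:ℂ) - a ≠ 0 := by
      intro h; apply ha; have := congrArg Complex.re h; simp at this; linarith
    have e12 : (b:ℂ) + -((c:ℂ)*Complex.I) - (a:ℂ) ≠ 0 := by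
      intro h; exact hc (by simpa using congrArg Complex.im h)
    have e13 : (b:ℂ) + -((c:ℂ)*Complex.I) + (a:ℂ) ≠ 0 := by
      intro h; exact hc (by simpa using congrArg Complex.im h)
    have e14 : (b:ℂ) + -((c:ℂ)*Complex.I) - ((c:ℂ)*Complex.I + -(b:ℂ)) ≠ 0 := by
      intro h; apply hc; have := congrArg Complex.im h; simp at this; linarith
    have e15 : (c:ℂ)*Complex.I + -(b:ℂ) - (a:ℂ) ≠ 0 := by
      intro h; exact hc (by simpa using congrArg Complex.im h)
    have e16 : (c:ℂ)*Complex.I + -(b:ℂ) + (a:ℂ) ≠ 0 := by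
      intro h; exact hc (by simpa using congrArg Complex.im h)
    have e17 : (c:ℂ)*Complex.I + -(b:ℂ) - ((b:ℂ) + -((c:ℂ)*Complex.I)) ≠ 0 := by
      intro h; apply hc; have := congrArg Complex.im h; simp at this; linarith
    have hD2 : (b:ℂ)*((b:ℂ) - Complex.I*(c:ℂ)*4) - (c:ℂ)^2*3 ≠ 0 := by
      convert hD using 1; ring
    simp only [mul_comm (c:ℂ) Complex.I] at e2 e3 e4 e5 e6 e7 e8 e9 e12 e13 e14 e15 e16 e17
    subst hz hΓ hΛ
    intro n
    fin_cases n <;>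
      simp only [Matrix.cons_val_zero, Matrix.cons_val_one, Matrix.head_cons,
        Matrix.cons_val_two, Matrix.tail_cons, Matrix.cons_val_three, Matrix.cons_val_four]
    · rw [Finset.sum_filter, Fin.sum_univ_five]
      simp only [Matrix.cons_val_zero, Matrix.cons_val_one, Matrix.head_cons,
        Matrix.cons_val_two, Matrix.tail_cons, Matrix.cons_val_three, Matrix.cons_val_four]
      norm_num (config := { decide := true }) [map_sub, map_add, map_mul, Complex.conj_ofReal, Complex.conj_I]
      field_simp
      try rw [eq_div_iff (by simp [mul_eq_zero]; tauto)]
      linear_combination ((-20:ℂ)*(c:ℂ)^4 + (-20:ℂ)*(b:ℂ)^2*(c:ℂ)^2 + (8:ℂ)*(a:ℂ)^2*(c:ℂ)^2) * Complex.I_sq + ((20:ℂ)*(c:ℂ)^2 + (40:ℂ)*(b:ℂ)*(c:ℂ)*Complex.I + (-20:ℂ)*(b:ℂ)^2 + (4:ℂ)*(a:ℂ)^2) * E2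
    · rw [Finset.sum_filter, Fin.sum_univ_five]
      simp only [Matrix.cons_val_zero, Matrix.cons_val_one, Matrix.head_cons,
        Matrix.cons_val_two, Matrix.tail_cons, Matrix.cons_val_three, Matrix.cons_val_four]
      norm_num (config := { decide := true }) [map_sub, map_add, map_mul, Complex.conj_ofReal, Complex.conj_I]
      field_simp
      try rw [eq_div_iff (by simp [mul_eq_zero]; tauto)]
      linear_combination ((-20:ℂ)*(c:ℂ)^4 + (-20:ℂ)*(b:ℂ)^2*(c:ℂ)^2 + (8:ℂ)*(a:ℂ)^2*(c:ℂ)^2) * Complex.I_sq + ((20:ℂ)*(c:ℂ)^2 + (40:ℂ)*(b:ℂ)*(c:ℂ)*Complex.I + (-20:ℂ)*(b:ℂ)^2 + (4:ℂ)*(a:ℂ)^2) * E2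
    · rw [Finset.sum_filter, Fin.sum_univ_five]
      simp only [Matrix.cons_val_zero, Matrix.cons_val_one, Matrix.head_cons,
        Matrix.cons_val_two, Matrix.tail_cons, Matrix.cons_val_three, Matrix.cons_val_four]
      norm_num (config := { decide := true }) [map_sub, map_add, map_mul, Complex.conj_ofReal, Complex.conj_I]
      field_simp
      try rw [eq_div_iff (by simp [mul_eq_zero]; tauto)]
      linear_combination ((40:ℂ)*(c:ℂ)^7*Complex.I + (-40:ℂ)*(c:ℂ)^7*Complex.I^3 + (-200:ℂ)*(b:ℂ)*(c:ℂ)^6 + (200:ℂ)*(b:ℂ)*(c:ℂ)^6*Complex.I^2 + (-80:ℂ)*(b:ℂ)*(c:ℂ)^6*Complex.I^4 + (-360:ℂ)*(b:ℂ)^2*(c:ℂ)^5*Complex.I + (280:ℂ)*(b:ℂ)^2*(c:ℂ)^5*Complex.I^3 + (200:ℂ)*(b:ℂ)^3*(c:ℂ)^4 + (-280:ℂ)*(b:ℂ)^3*(c:ℂ)^4*Complex.I^2 + (-80:ℂ)*(b:ℂ)^4*(c:ℂ)^3*Complex.I + (320:ℂ)*(b:ℂ)^5*(c:ℂ)^2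 + (-72:ℂ)*(a:ℂ)^2*(c:ℂ)^5*Complex.I + (-8:ℂ)*(a:ℂ)^2*(c:ℂ)^5*Complex.I^3 + (376:ℂ)*(a:ℂ)^2*(b:ℂ)*(c:ℂ)^4 + (-56:ℂ)*(a:ℂ)^2*(b:ℂ)*(c:ℂ)^4*Complex.I^2 + (384:ℂ)*(a:ℂ)^2*(b:ℂ)^2*(c:ℂ)^3*Complex.I + (-656:ℂ)*(a:ℂ)^2*(b:ℂ)^3*(c:ℂ)^2 + (8:ℂ)*(a:ℂ)^4*(c:ℂ)^3*Complex.I + (24:ℂ)*(a:ℂ)^4*(b:ℂ)*(c:ℂ)^2) * Complex.I_sq + ((-40:ℂ)*(c:ℂ)^5*Complex.I + (200:ℂ)*(b:ℂ)*(c:ℂ)^4 + (400:ℂ)*(b:ℂ)^2*(c:ℂ)^3*Complex.I + (-400:ℂ)*(b:ℂ)^3*(c:ℂ)^2 + (-200:ℂ)*(b:ℂ)^4*(c:ℂ)*Complex.I + (40:ℂ)*(b:ℂ)^5 + (-8:ℂ)*(a:ℂ)^2*(c:ℂ)^3*Complex.I + (24:ℂ)*(a:ℂ)^2*(b:ℂ)*(c:ℂ)^2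 + (24:ℂ)*(a:ℂ)^2*(b:ℂ)^2*(c:ℂ)*Complex.I + (-8:ℂ)*(a:ℂ)^2*(b:ℂ)^3) * E2
    · rw [Finset.sum_filter, Fin.sum_univ_five]
      simp only [Matrix.cons_val_zero, Matrix.cons_val_one, Matrix.head_cons,
        Matrix.cons_val_two, Matrix.tail_cons, Matrix.cons_val_three, Matrix.cons_val_four]
      norm_num (config := { decide := true }) [map_sub, map_add, map_mul, Complex.conj_ofReal, Complex.conj_I]
      field_simp
      try rw [eq_div_iff (by simp [mul_eq_zero]; tauto)]
      linear_combination ((-40:ℂ)*(c:ℂ)^7*Complex.I + (40:ℂ)*(c:ℂ)^7*Complex.I^3 + (200:ℂ)*(b:ℂ)*(c:ℂ)^6 + (-200:ℂ)*(b:ℂ)*(c:ℂ)^6*Complex.I^2 + (80:ℂ)*(b:ℂ)*(c:ℂ)^6*Complex.I^4 + (360:ℂ)*(b:ℂ)^2*(c:ℂ)^5*Complex.I + (-280:ℂ)*(b:ℂ)^2*(c:ℂ)^5*Complex.I^3 + (-200:ℂ)*(b:ℂ)^3*(c:ℂ)^4 + (280:ℂ)*(b:ℂ)^3*(c:ℂ)^4*Complex.I^2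 + (80:ℂ)*(b:ℂ)^4*(c:ℂ)^3*Complex.I + (-320:ℂ)*(b:ℂ)^5*(c:ℂ)^2 + (72:ℂ)*(a:ℂ)^2*(c:ℂ)^5*Complex.I + (8:ℂ)*(a:ℂ)^2*(c:ℂ)^5*Complex.I^3 + (-376:ℂ)*(a:ℂ)^2*(b:ℂ)*(c:ℂ)^4 + (56:ℂ)*(a:ℂ)^2*(b:ℂ)*(c:ℂ)^4*Complex.I^2 + (-384:ℂ)*(a:ℂ)^2*(b:ℂ)^2*(c:ℂ)^3*Complex.I + (656:ℂ)*(a:ℂ)^2*(b:ℂ)^3*(c:ℂ)^2 + (-8:ℂ)*(a:ℂ)^4*(c:ℂ)^3*Complex.I + (-24:ℂ)*(a:ℂ)^4*(b:ℂ)*(c:ℂ)^2) * Complex.I_sq + ((40:ℂ)*(c:ℂ)^5*Complex.I + (-200:ℂ)*(b:ℂ)*(c:ℂ)^4 + (-400:ℂ)*(b:ℂ)^2*(c:ℂ)^3*Complex.I + (400:ℂ)*(b:ℂ)^3*(c:ℂ)^2 + (200:ℂ)*(b:ℂ)^4*(c:ℂ)*Complex.I + (-40:ℂ)*(b:ℂ)^5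 + (8:ℂ)*(a:ℂ)^2*(c:ℂ)^3*Complex.I + (-24:ℂ)*(a:ℂ)^2*(b:ℂ)*(c:ℂ)^2 + (-24:ℂ)*(a:ℂ)^2*(b:ℂ)^2*(c:ℂ)*Complex.I + (8:ℂ)*(a:ℂ)^2*(b:ℂ)^3) * E2
    · rw [Finset.sum_filter, Fin.sum_univ_five]
      simp only [Matrix.cons_val_zero, Matrix.cons_val_one, Matrix.head_cons,
        Matrix.cons_val_two, Matrix.tail_cons, Matrix.cons_val_three, Matrix.cons_val_four]
      norm_num (config := { decide := true }) [map_sub, map_add, map_mul, Complex.conj_ofReal, Complex.conj_I]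
      field_simp
      try rw [eq_div_iff (by simp [mul_eq_zero]; tauto)]
      rw [show (c:ℂ)*Complex.I + -(b:ℂ) = -((b:ℂ) + -((c:ℂ)*Complex.I)) by ring, div_neg]; ring
  · -- abs
    have key0 : ((64:ℂ)*(a:ℂ)^4 - 20) *
        ((-(a:ℂ)^2 + 5*(b:ℂ)^2 - 10*Complex.I*(b:ℂ)*(c:ℂ) - 5*(c:ℂ)^2) *
          (-(a:ℂ)^2 + 5*(b:ℂ)^2 + 10*Complex.I*(b:ℂ)*(c:ℂ) - 5*(c:ℂ)^2) -
         (2*(a:ℂ)^2 * ((b:ℂ)^2 - 4*Complex.I*(b:ℂ)*(c:ℂ) - 3*(c:ℂ)^2)) *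
          (2*(a:ℂ)^2 * ((b:ℂ)^2 + 4*Complex.I*(b:ℂ)*(c:ℂ) - 3*(c:ℂ)^2))) =
        ((64:ℂ)*(a:ℂ)^4 - 20) * 0 := by
      rw [mul_zero]
      linear_combination ((2000:ℂ)*(b:ℂ)^2*(c:ℂ)^2 + (-7680:ℂ)*(a:ℂ)^4*(b:ℂ)^2*(c:ℂ)^2 + (4096:ℂ)*(a:ℂ)^8*(b:ℂ)^2*(c:ℂ)^2) * Complex.I_sq + ((-500:ℂ)*(c:ℂ)^2 + (-500:ℂ)*(b:ℂ)^2 + (-1200:ℂ)*(a:ℂ)^2 + (2320:ℂ)*(a:ℂ)^4*(c:ℂ)^2 + (1680:ℂ)*(a:ℂ)^4*(b:ℂ)^2 + (5280:ℂ)*(a:ℂ)^6 + (-2304:ℂ)*(a:ℂ)^8*(c:ℂ)^2 + (-256:ℂ)*(a:ℂ)^8*(b:ℂ)^2 + (-4608:ℂ)*(a:ℂ)^10) * E2 + ((-20:ℂ)*(a:ℂ)^2 + (64:ℂ)*(a:ℂ)^6) * E1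
    have key := sub_eq_zero.mp (mul_left_cancel₀ hdenC key0)
    have hnseq : ((Complex.normSq (-(a:ℂ)^2 + 5*(b:ℂ)^2 - 10*Complex.I*(b:ℂ)*(c:ℂ) - 5*(c:ℂ)^2) : ℝ) : ℂ)
        = ((Complex.normSq (2*(a:ℂ)^2 * ((b:ℂ)^2 - 4*Complex.I*(b:ℂ)*(c:ℂ) - 3*(c:ℂ)^2)) : ℝ) : ℂ) := by
      rw [← Complex.mul_conj, ← Complex.mul_conj, hNc, hDc]
      exact key
    have hns : Complex.normSq (-(a:ℂ)^2 + 5*(b:ℂ)^2 - 10*Complex.I*(b:ℂ)*(c:ℂ) - 5*(c:ℂ)^2)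
        = Complex.normSq (2*(a:ℂ)^2 * ((b:ℂ)^2 - 4*Complex.I*(b:ℂ)*(c:ℂ) - 3*(c:ℂ)^2)) := by
      exact_mod_cast hnseq
    have habs : ‖(-(a:ℂ)^2 + 5*(b:ℂ)^2 - 10*Complex.I*(b:ℂ)*(c:ℂ) - 5*(c:ℂ)^2)‖
        = ‖(2*(a:ℂ)^2 * ((b:ℂ)^2 - 4*Complex.I*(b:ℂ)*(c:ℂ) - 3*(c:ℂ)^2))‖ := by
      rw [Complex.norm_def, Complex.norm_def, hns]
    rw [hΛ, norm_div, habs]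
    exact div_self (norm_ne_zero_iff.mpr hDen)
  · -- im
    intro h0
    have hre : (starRingEnd ℂ) Λ = Λ := Complex.conj_eq_iff_im.mpr h0
    rw [hΛ, map_div₀, hNc, hDc] at hre
    have hcross := (div_eq_div_iff hDen' hDen).mp hre
    have hzero : (a:ℂ)^4 * (b:ℂ) * (c:ℂ) = 0 := by
      linear_combination (Complex.I/64) * hcross + ((5/8:ℂ)*(a:ℂ)^2*(b:ℂ)*(c:ℂ)^3 + (5/8:ℂ)*(a:ℂ)^2*(b:ℂ)^3*(c:ℂ) + (-1/4:ℂ)*(a:ℂ)^4*(b:ℂ)*(c:ℂ)) * Complex.I_sq + ((-5/8:ℂ)*(a:ℂ)^2*(b:ℂ)*(c:ℂ)) * E2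
    exact (mul_ne_zero (mul_ne_zero (pow_ne_zero 4 haC) hbC) hcC) hzero
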